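/- arXiv:1710.09857 — 5 statements merged into one kernel-verified Lean document; each statement's English description precedes it below -/
import Mathlib

section
/- Suppose the matrix I − (P − W) is invertible, where P is row-stochastic with stationary distribution w and W has all rows equal to wᵀ. Then the matrix G = ((I − (P − W))⁻¹ − W)·D, where D = diag(1/w_i), satisfies (I − P)G = (I − W)D and WG = 0. -/
open Matrix BigOperators

/-- If `I − (P − W)` is invertible, then `G = ((I − (P − W))⁻¹ − W)·D`, with
`D = diag(1/w_i)`, satisfies `(I − P)G = (I − W)D` and `WG = 0`. -/
theorem greens_function_properties {n : ℕ}
    (P W D G : Matrix (Fin n) (Fin n) ℝ) (w : Fin n → ℝ)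
    (hP_nonneg : ∀ i j, 0 ≤ P i j)
    (hP_row : ∀ i, ∑ j, P i j = 1)
    (hw_pos : ∀ i, 0 < w i)
    (hw_sum : ∑ i, w i = 1)
    (hw_stat : ∀ j, ∑ i, w i * P i j = w j)
    (hW : ∀ i j, W i j = w j)
    (hD : D = Matrix.diagonal (fun i => 1 / w i))
    (hinv : IsUnit (1 - (P - W)).det)
    (hG : G = ((1 - (P - W))⁻¹ - W) * D) :
    (1 - P) * G = (1 - W) * D ∧ W * G = 0 := by
  set A : Matrix (Fin n) (Fin n) ℝ := 1 - (P - W) with hA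
  have hPW : P * W = W := by
    ext i j
    simp [Matrix.mul_apply, hW, ← Finset.sum_mul, hP_row]
  have hWP : W * P = W := by
    ext i j
    simp [Matrix.mul_apply, hW, hw_stat]
  have hWW : W * W = W := by
    ext i j
    simp [Matrix.mul_apply, hW, ← Finset.sum_mul, hw_sum]
  have hWA : W * A = W := by
    simp [hA, Matrix.mul_sub, hWP, hWW]
  have hAW : A * W = W := by
    simp [hA, Matrix.sub_mul, hPW, hWW]
  have hAZ : A * A⁻¹ = 1 := Matrix.mul_nonsing_inv A hinv
  have hWZ : W * A⁻¹ = W := by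
    calc W * A⁻¹ = (W * A) * A⁻¹ := by rw [hWA]
    _ = W * (A * A⁻¹) := by rw [Matrix.mul_assoc]
    _ = W := by rw [hAZ, Matrix.mul_one]
  constructor
  · have h1 : (1 - P) * A⁻¹ = 1 - W := by
      have : (1 - P : Matrix (Fin n) (Fin n) ℝ) = A - W := by rw [hA]; abel
      rw [this, Matrix.sub_mul, hAZ, hWZ]
    have h2 : (1 - P) * W = 0 := by rw [Matrix.sub_mul, Matrix.one_mul, hPW, sub_self]
    rw [hG, ← Matrix.mul_assoc, Matrix.mul_sub, h1, h2, sub_zero]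
  · rw [hG, ← Matrix.mul_assoc, Matrix.mul_sub, hWZ, hWW, sub_self, Matrix.zero_mul]
end

section
/- Under the hypotheses that I − (P − W) is invertible, the Green's function G is the unique matrix satisfying (I − P)G = (I − W)D and WG = 0. -/
open Matrix BigOperators

/-- The Green's function is the unique matrix satisfying `(I − P)G = (I − W)D` and
`WG = 0`: any two matrices satisfying both equations are equal, given that the null
space of `I − P` is spanned by the all-ones vector `𝟏`. -/
theorem greens_function_unique {n : ℕ}
    (P W D G₁ G₂ : Matrix (Fin n) (Fin n) ℝ) (w : Fin n → ℝ)
    (hP_nonneg : ∀ i j, 0 ≤ P i j)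
    (hP_row : ∀ i, ∑ j, P i j = 1)
    (hw_pos : ∀ i, 0 < w i)
    (hw_sum : ∑ i, w i = 1)
    (hw_stat : ∀ j, ∑ i, w i * P i j = w j)
    (hW : ∀ i j, W i j = w j)
    (hD : D = Matrix.diagonal (fun i => 1 / w i))
    (hnull : ∀ v : Fin n → ℝ, (1 - P).mulVec v = 0 → ∃ c : ℝ, v = fun _ => c)
    (h₁ : (1 - P) * G₁ = (1 - W) * D ∧ W * G₁ = 0)
    (h₂ : (1 - P) * G₂ = (1 - W) * D ∧ W * G₂ = 0) :
    G₁ = G₂ := by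
  set H := G₁ - G₂ with hH
  have hPH : (1 - P) * H = 0 := by
    rw [hH, Matrix.mul_sub, h₁.1, h₂.1, sub_self]
  have hWH : W * H = 0 := by
    rw [hH, Matrix.mul_sub, h₁.2, h₂.2, sub_self]
  have hcol : ∀ j, ∃ c : ℝ, (fun i => H i j) = fun _ => c := by
    intro j
    apply hnull
    funext i
    have := congrFun (congrFun hPH i) j
    simpa [Matrix.mul_apply, Matrix.mulVec, dotProduct] using this
  have : H = 0 := by
    funext i j
    obtain ⟨c, hc⟩ := hcol j
    have hic : H i j = c := congrFun hc i
    have h0 := congrFun (congrFun hWH i) j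
    simp only [Matrix.mul_apply, Matrix.zero_apply] at h0
    have : ∑ k, W i k * H k j = c := by
      calc ∑ k, W i k * H k j = ∑ k, w k * c := by
            apply Finset.sum_congr rfl
            intro k _
            rw [hW, congrFun hc k]
          _ = c := by rw [← Finset.sum_mul, hw_sum, one_mul]
    rw [hic, ← this, h0]; rfl
  have := sub_eq_zero.mp (hH ▸ this)
  exact this
end

section
/- If G is the Green's function (satisfying (I − P)G = (I − W)D and WG = 0) and M is defined by m_{ij} = G_{jj} − G_{ij}, then M has zero diagonal and satisfies (I − P)M = J − D, where J is the all-ones matrix. -/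
open Matrix BigOperators

/-- If `G` is the Green's function (satisfying `(I − P)G = (I − W)D` and `WG = 0`) and
`M` is defined by `m_{ij} = G_{jj} − G_{ij}`, then `M` has zero diagonal and satisfies
`(I − P)M = J − D`, where `J` is the all-ones matrix. -/
theorem hitting_times_from_greens_function {n : ℕ}
    (P W D G M : Matrix (Fin n) (Fin n) ℝ) (w : Fin n → ℝ)
    (hP_nonneg : ∀ i j, 0 ≤ P i j)
    (hP_row : ∀ i, ∑ j, P i j = 1)
    (hw_pos : ∀ i, 0 < w i)
    (hw_sum : ∑ i, w i = 1)
    (hw_stat : ∀ j, ∑ i, w i * P i j = w j)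
    (hW : ∀ i j, W i j = w j)
    (hD : D = Matrix.diagonal (fun j => 1 / w j))
    (hG₁ : (1 - P) * G = (1 - W) * D)
    (hG₂ : W * G = 0)
    (hM : ∀ i j, M i j = G j j - G i j) :
    (∀ j, M j j = 0) ∧
      (1 - P) * M = (Matrix.of fun _ _ => (1 : ℝ)) - D := by
  constructor
  · intro j; rw [hM]; ring
  · ext i j
    have key : ∑ k, ((1 : Matrix (Fin n) (Fin n) ℝ) i k - P i k) * G k j
        = ((1 - W) * D) i j := by
      rw [← hG₁]
      simp [Matrix.mul_apply, Matrix.sub_apply]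
    have hsum : ∑ k, ((1 : Matrix (Fin n) (Fin n) ℝ) i k - P i k) = 0 := by
      simp [Matrix.one_apply, Finset.sum_sub_distrib, hP_row i]
    have : ((1 - P) * M) i j
        = (∑ k, ((1 : Matrix (Fin n) (Fin n) ℝ) i k - P i k)) * G j j
          - ∑ k, ((1 : Matrix (Fin n) (Fin n) ℝ) i k - P i k) * G k j := by
      simp only [Matrix.mul_apply, Matrix.sub_apply, hM, Finset.sum_mul]
      rw [← Finset.sum_sub_distrib]
      congr 1; ext k; ring
    rw [this, hsum, key]
    have hWD : ((1 - W) * D) i j = (if i = j then 1 / w j else 0) - 1 := by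
      simp [Matrix.mul_apply, hD, Matrix.diagonal, Matrix.sub_apply, Matrix.one_apply,
        hW, Finset.sum_ite_eq', mul_ite]
      by_cases h : i = j <;> simp [h, sub_mul, mul_inv_cancel₀ (hw_pos j).ne']
    rw [hWD, hD]
    simp [Matrix.sub_apply, Matrix.diagonal, Matrix.one_apply]
    by_cases h : i = j <;> simp [h] <;> ring
end

section
/- If m_{ij} = G_{jj} − G_{ij} where G is the Green's function normalized by WG = 0, then the quantity K_i = ∑_j m_{ij} w_j equals ∑_j G_{jj} w_j − (GD⁻¹)_{i·}·𝟏; in particular, using Z = G·D⁻¹ with row sums zero, K_i = trace(Z) for every i, so K_i is independent of i (Kemeny's constant). -/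
open Matrix BigOperators

/-- With `m_{ij} = G_{jj} − G_{ij}` for the Green's function `G = ((I−(P−W))⁻¹ − W)D`
normalized by `WG = 0`, the quantity `K_i = ∑_j w_j m_{ij}` equals `trace(Z)` for
`Z = (I−(P−W))⁻¹ − W` and every `i`; in particular `K_i` is independent of `i`
(Kemeny's constant). -/
theorem kemeny_constant_is_trace {n : ℕ}
    (P W Z G : Matrix (Fin n) (Fin n) ℝ) (w : Fin n → ℝ)
    (hP_nonneg : ∀ i j, 0 ≤ P i j)
    (hP_row : ∀ i, ∑ j, P i j = 1)
    (hw_pos : ∀ i, 0 < w i)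
    (hw_sum : ∑ i, w i = 1)
    (hw_stat : ∀ j, ∑ i, w i * P i j = w j)
    (hW : ∀ i j, W i j = w j)
    (hinv : IsUnit (1 - (P - W)).det)
    (hZ : Z = (1 - (P - W))⁻¹ - W)
    (hG : G = Z * Matrix.diagonal (fun j => 1 / w j)) :
    ∀ i : Fin n, (∑ j, w j * (G j j - G i j)) = Matrix.trace Z := by
  intro i
  set A := (1 : Matrix (Fin n) (Fin n) ℝ) - (P - W) with hA
  -- G entries
  have hGentry : ∀ a b, G a b = Z a b * (1 / w b) := by
    intro a b
    simp [hG, Matrix.mul_apply, Matrix.diagonal, Finset.sum_ite_eq, mul_ite]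
  have hwG : ∀ a b, w b * G a b = Z a b := by
    intro a b
    rw [hGentry]
    field_simp [(hw_pos b).ne']
  -- row sums of A⁻¹ are 1
  have hA1 : A.mulVec (fun _ => 1) = (fun _ => 1) := by
    funext a
    simp only [hA, Matrix.mulVec, dotProduct, Matrix.sub_apply, Matrix.one_apply]
    simp only [sub_mul, mul_one]
    rw [Finset.sum_sub_distrib, Finset.sum_sub_distrib]
    simp [hP_row, Finset.sum_ite_eq', hW, hw_sum]
  have hAinv1 : A⁻¹.mulVec (fun _ => 1) = (fun _ => 1) := by
    calc A⁻¹.mulVec (fun _ => 1) = A⁻¹.mulVec (A.mulVec (fun _ => 1)) := by rw [hA1]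
    _ = (A⁻¹ * A).mulVec (fun _ => 1) := by rw [Matrix.mulVec_mulVec]
    _ = (fun _ => 1) := by rw [Matrix.nonsing_inv_mul A hinv]; simp
  -- row sums of Z are 0
  have hZrow : ∀ a, ∑ j, Z a j = 0 := by
    intro a
    have h1 : ∑ j, A⁻¹ a j = 1 := by
      have := congrFun hAinv1 a
      simpa [Matrix.mulVec, dotProduct] using this
    have h2 : ∑ j, W a j = 1 := by simp [hW, hw_sum]
    rw [hZ]; simp only [Matrix.sub_apply]; rw [Finset.sum_sub_distrib, h1, h2, sub_self]
  have key : ∀ a, ∑ j, w j * G a j = 0 := by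
    intro a
    simp only [hwG]
    exact hZrow a
  calc (∑ j, w j * (G j j - G i j))
      = ∑ j, (w j * G j j - w j * G i j) := by
        apply Finset.sum_congr rfl; intros; ring
    _ = (∑ j, w j * G j j) - ∑ j, w j * G i j := Finset.sum_sub_distrib _ _
    _ = (∑ j, Z j j) - 0 := by rw [key i]; simp only [hwG]
    _ = Matrix.trace Z := by simp [Matrix.trace, Matrix.diag]
end

section
/- Kemeny's constant K = trace(Z), where Z = (I − (P − W))⁻¹ − W, equals ∑_{j=1}^{n−1} 1/(1 − ν_j), where 1, ν_1, …, ν_{n−1} are the eigenvalues of P counted with multiplicity, assuming P is diagonalizable with all ν_j ≠ 1. -/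
open Matrix BigOperators

/-- Kemeny's constant `K = trace(Z)`, where `Z = (I − (P − W))⁻¹ − W`, equals
`∑_{j≠j₀} 1/(1 − ν_j)`, where `1 = ν_{j₀}` together with the `ν_j` (`j ≠ j₀`) are the
eigenvalues of `P` counted with multiplicity, assuming `P` is diagonalizable and all
eigenvalues other than the simple eigenvalue `1` are different from `1`. -/
theorem kemeny_constant_spectral {n : ℕ}
    (P W S : Matrix (Fin n) (Fin n) ℝ) (w ν : Fin n → ℝ) (j₀ : Fin n)
    (hP_nonneg : ∀ i j, 0 ≤ P i j)
    (hP_row : ∀ i, ∑ j, P i j = 1)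
    (hw_pos : ∀ i, 0 < w i)
    (hw_sum : ∑ i, w i = 1)
    (hw_stat : ∀ j, ∑ i, w i * P i j = w j)
    (hW : ∀ i j, W i j = w j)
    (hS : IsUnit S.det)
    (hdiagonalizable : P = S * Matrix.diagonal ν * S⁻¹)
    (hν₀ : ν j₀ = 1)
    (hν : ∀ j, j ≠ j₀ → ν j ≠ 1) :
    Matrix.trace ((1 - (P - W))⁻¹ - W) =
      ∑ j ∈ Finset.univ.erase j₀, 1 / (1 - ν j) := by
  classical
  have hS1 : S * S⁻¹ = 1 := Matrix.mul_nonsing_inv S hS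
  have hS2 : S⁻¹ * S = 1 := Matrix.nonsing_inv_mul S hS
  set D := Matrix.diagonal ν with hD
  have hSP : S⁻¹ * P = D * S⁻¹ := by
    rw [hdiagonalizable, ← Matrix.mul_assoc, ← Matrix.mul_assoc, hS2, Matrix.one_mul]
  have hPS : P * S = S * D := by
    rw [hdiagonalizable, Matrix.mul_assoc, hS2, Matrix.mul_one]
  -- u i := row sums of S⁻¹ ; v j := w-weighted column sums of S
  -- eigen relations for u
  have hu : ∀ i, ν i * (∑ k, S⁻¹ i k) = ∑ k, S⁻¹ i k := by
    intro i
    have h1 : ∑ j, (S⁻¹ * P) i j = ∑ k, S⁻¹ i k := by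
      simp only [Matrix.mul_apply]
      rw [Finset.sum_comm]
      refine Finset.sum_congr rfl fun k _ => ?_
      rw [← Finset.mul_sum, hP_row, mul_one]
    have h2 : ∑ j, (D * S⁻¹) i j = ν i * ∑ k, S⁻¹ i k := by
      simp only [hD, Matrix.diagonal_mul]
      rw [Finset.mul_sum]
    rw [← h2, ← hSP, h1]
  have hv : ∀ j, (∑ i, w i * S i j) * ν j = ∑ i, w i * S i j := by
    intro j
    have h1 : ∑ i, w i * (P * S) i j = ∑ i, w i * S i j := by
      simp only [Matrix.mul_apply, Finset.mul_sum]
      rw [Finset.sum_comm]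
      refine Finset.sum_congr rfl fun k _ => ?_
      have : ∑ i, w i * (P i k * S k j) = (∑ i, w i * P i k) * S k j := by
        rw [Finset.sum_mul]; exact Finset.sum_congr rfl fun i _ => by ring
      rw [this, hw_stat]
    have h2 : ∑ i, w i * (S * D) i j = (∑ i, w i * S i j) * ν j := by
      simp only [hD, Matrix.mul_diagonal]
      rw [Finset.sum_mul]
      exact Finset.sum_congr rfl fun i _ => by ring
    rw [← h2, ← hPS, h1]
  have hu0 : ∀ i, i ≠ j₀ → (∑ k, S⁻¹ i k) = 0 := by
    intro i hi
    have h : (ν i - 1) * (∑ k, S⁻¹ i k) = 0 := by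
      have := hu i; ring_nf; linarith [hu i]
    rcases mul_eq_zero.mp h with h' | h'
    · exact absurd (by linarith : ν i = 1) (hν i hi)
    · exact h'
  have hv0 : ∀ j, j ≠ j₀ → (∑ i, w i * S i j) = 0 := by
    intro j hj
    have h : (∑ i, w i * S i j) * (ν j - 1) = 0 := by
      have := hv j; ring_nf; linarith [hv j]
    rcases mul_eq_zero.mp h with h' | h'
    · exact h'
    · exact absurd (by linarith : ν j = 1) (hν j hj)
  -- entries of S⁻¹ * W * S
  have hUent : ∀ i j, (S⁻¹ * W * S) i j = (∑ k, S⁻¹ i k) * (∑ l, w l * S l j) := by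
    intro i j
    simp only [Matrix.mul_apply, hW]
    rw [Finset.mul_sum]
    refine Finset.sum_congr rfl fun l _ => ?_
    rw [Finset.sum_mul, Finset.sum_mul]
    exact Finset.sum_congr rfl fun k _ => by ring
  have htrW : Matrix.trace W = 1 := by
    simp only [Matrix.trace, Matrix.diag]
    rw [← hw_sum]
    exact Finset.sum_congr rfl fun i _ => hW i i
  have hkey : (∑ k, S⁻¹ j₀ k) * (∑ l, w l * S l j₀) = 1 := by
    have h1 : Matrix.trace (S⁻¹ * W * S) = 1 := by
      rw [Matrix.trace_mul_cycle, hS1, Matrix.one_mul, htrW]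
    have h2 : Matrix.trace (S⁻¹ * W * S)
        = ∑ i, (∑ k, S⁻¹ i k) * (∑ l, w l * S l i) := by
      simp only [Matrix.trace, Matrix.diag]
      exact Finset.sum_congr rfl fun i _ => hUent i i
    have h3 : ∑ i, (∑ k, S⁻¹ i k) * (∑ l, w l * S l i)
        = (∑ k, S⁻¹ j₀ k) * (∑ l, w l * S l j₀) := by
      refine Finset.sum_eq_single j₀ (fun i _ hi => ?_) (fun h => absurd (Finset.mem_univ j₀) h)
      rw [hu0 i hi, zero_mul]
    rw [← h3, ← h2, h1]
  -- the diagonal form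
  set e : Fin n → ℝ := fun j => if j = j₀ then 1 else 1 - ν j with he
  have hmid : S⁻¹ * (1 - (P - W)) * S = Matrix.diagonal e := by
    have e1 : S⁻¹ * P * S = D := by
      rw [hSP, Matrix.mul_assoc, hS2, Matrix.mul_one]
    have expand : S⁻¹ * (1 - (P - W)) * S
        = S⁻¹ * S - (S⁻¹ * P * S - S⁻¹ * W * S) := by noncomm_ring
    rw [expand, e1, hS2]
    ext i j
    simp only [Matrix.sub_apply, Matrix.one_apply, hD, Matrix.diagonal_apply, hUent]
    by_cases hij : i = j
    · subst hij
      by_cases h0 : i = j₀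
      · subst h0
        simp only [if_pos rfl, he, hkey, hν₀]
        norm_num
      · simp only [if_pos rfl, he, if_neg h0, hu0 i h0, zero_mul]
        simp
    · simp only [if_neg hij]
      by_cases h0 : i = j₀
      · have hj0 : j ≠ j₀ := fun h => hij (h0.trans h.symm)
        rw [hv0 j hj0, mul_zero]; ring
      · rw [hu0 i h0, zero_mul]; ring
  have conj : ∀ X : Matrix (Fin n) (Fin n) ℝ, S * (S⁻¹ * X * S) * S⁻¹ = X := by
    intro X
    rw [← Matrix.mul_assoc S (S⁻¹ * X) S, ← Matrix.mul_assoc S S⁻¹ X, hS1, Matrix.one_mul,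
      Matrix.mul_assoc, hS1, Matrix.mul_one]
  have hA : (1 : Matrix (Fin n) (Fin n) ℝ) - (P - W) = S * Matrix.diagonal e * S⁻¹ := by
    rw [← hmid, conj]
  have hconjmul : ∀ X Y : Matrix (Fin n) (Fin n) ℝ,
      (S * X * S⁻¹) * (S * Y * S⁻¹) = S * (X * Y) * S⁻¹ := by
    intro X Y
    rw [Matrix.mul_assoc (S * X) S⁻¹ (S * Y * S⁻¹), ← Matrix.mul_assoc S⁻¹ (S * Y) S⁻¹,
      ← Matrix.mul_assoc S⁻¹ S Y, hS2, Matrix.one_mul,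
      ← Matrix.mul_assoc (S * X) Y S⁻¹, Matrix.mul_assoc S X Y]
  have hene : ∀ j, e j ≠ 0 := by
    intro j
    by_cases h0 : j = j₀
    · simp [he, h0]
    · simp only [he, if_neg h0]
      exact sub_ne_zero.mpr fun h => hν j h0 h.symm
  have hinv : (1 - (P - W))⁻¹ = S * Matrix.diagonal (fun j => (e j)⁻¹) * S⁻¹ := by
    apply Matrix.inv_eq_right_inv
    rw [hA, hconjmul, Matrix.diagonal_mul_diagonal]
    have : (fun j => e j * (e j)⁻¹) = fun _ => (1 : ℝ) :=
      funext fun j => mul_inv_cancel₀ (hene j)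
    rw [this, Matrix.diagonal_one, Matrix.mul_one, hS1]
  rw [Matrix.trace_sub, hinv, htrW, Matrix.trace_mul_cycle, hS2, Matrix.one_mul,
    Matrix.trace_diagonal]
  rw [← Finset.add_sum_erase _ _ (Finset.mem_univ j₀)]
  have hj₀ : (e j₀)⁻¹ = 1 := by simp [he]
  rw [hj₀]
  have : ∑ j ∈ Finset.univ.erase j₀, (e j)⁻¹
      = ∑ j ∈ Finset.univ.erase j₀, 1 / (1 - ν j) := by
    refine Finset.sum_congr rfl fun j hj => ?_
    rw [he]
    simp only [if_neg (Finset.mem_erase.mp hj).1]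
    rw [one_div]
  rw [this]
  ring
end
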